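/- arXiv:2111.05690 — 3 statements merged into one kernel-verified Lean document; each statement's English description precedes it below -/
import Mathlib

section
/- Let s ∈ [0, 1) and let G be the real symmetric 2×2 matrix with G_{11} = G_{22} = 1 and G_{12} = G_{21} = s. Then for every vector φ ∈ ℂ² with φ† G φ = 1, the l₁-norm of superposition satisfies 2|φ_1||φ_2| ≤ 1/(1 − s), and equality holds for the maximal state φ = (1/√(2(1 − s))) (1, −1)^⊤. -/
open Matrix BigOperators

/-- For the qubit Gram matrix with real inner product `s ∈ [0,1)`, every
normalized state `φ` (i.e. `φ† G φ = 1`) has `l₁`-norm of superposition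
`2|φ₁||φ₂| ≤ 1/(1−s)`, with equality for the maximal state `(1,−1)ᵀ/√(2(1−s))`. -/
theorem qubit_l1_norm_bound (s : ℝ) (hs : s ∈ Set.Ico (0 : ℝ) 1)
    (G : Matrix (Fin 2) (Fin 2) ℂ)
    (hGdef : G = !![1, (s : ℂ); (s : ℂ), 1])
    (ψ : Fin 2 → ℂ)
    (hψdef : ψ = fun i => ((1 / Real.sqrt (2 * (1 - s)) : ℝ) : ℂ) *
      (if i = 0 then 1 else -1)) :
    (∀ φ : Fin 2 → ℂ, star φ ⬝ᵥ (G *ᵥ φ) = 1 → 2 * ‖φ 0‖ * ‖φ 1‖ ≤ 1 / (1 - s)) ∧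
    star ψ ⬝ᵥ (G *ᵥ ψ) = 1 ∧
    2 * ‖ψ 0‖ * ‖ψ 1‖ = 1 / (1 - s) := by
  obtain ⟨hs0, hs1⟩ := hs
  have h1s : (0:ℝ) < 1 - s := by linarith
  have h2s : (0:ℝ) < 2 * (1 - s) := by linarith
  have hsq : Real.sqrt (2 * (1 - s)) ^ 2 = 2 * (1 - s) := Real.sq_sqrt h2s.le
  have hsqpos : 0 < Real.sqrt (2 * (1 - s)) := Real.sqrt_pos.mpr h2s
  subst hGdef hψdef
  set c : ℂ := ((1 / Real.sqrt (2 * (1 - s)) : ℝ) : ℂ) with hc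
  have hstar : (starRingEnd ℂ) c = c := by rw [hc]; exact Complex.conj_ofReal _
  have hnorm : ‖c‖ = 1 / Real.sqrt (2 * (1 - s)) := by
    rw [hc, Complex.norm_real]
    exact abs_of_pos (by positivity)
  have hval : c ^ 2 * (2 * (1 - (s:ℂ))) = 1 := by
    have h : (1 / Real.sqrt (2*(1-s)) : ℝ) ^ 2 * (2*(1-s)) = 1 := by
      rw [div_pow, one_pow, hsq]; field_simp
    calc c ^ 2 * (2 * (1 - (s:ℂ)))
        = (((1 / Real.sqrt (2*(1-s)) : ℝ) ^ 2 * (2*(1-s)) : ℝ) : ℂ) := by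
          rw [hc]; push_cast; ring
      _ = 1 := by rw [h]; norm_num
  refine ⟨?_, ?_, ?_⟩
  · intro φ hφ
    simp only [dotProduct, mulVec, Fin.sum_univ_two] at hφ
    have hre := congrArg Complex.re hφ
    simp [Complex.add_re, Complex.mul_re, Complex.mul_im] at hre
    have ha : ‖φ 0‖^2 = (φ 0).re^2 + (φ 0).im^2 := by
      rw [Complex.sq_norm, Complex.normSq_apply]; ring
    have hb : ‖φ 1‖^2 = (φ 1).re^2 + (φ 1).im^2 := by
      rw [Complex.sq_norm, Complex.normSq_apply]; ring
    have hca : (0:ℝ) ≤ ‖φ 0‖ := norm_nonneg _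
    have hcb : (0:ℝ) ≤ ‖φ 1‖ := norm_nonneg _
    have hcs : -(‖φ 0‖ * ‖φ 1‖) ≤ (φ 0).re * (φ 1).re + (φ 0).im * (φ 1).im := by
      have h2 := Complex.abs_re_le_norm ((starRingEnd ℂ) (φ 0) * φ 1)
      rw [norm_mul, Complex.norm_conj] at h2
      have heq : ((starRingEnd ℂ) (φ 0) * φ 1).re
          = (φ 0).re * (φ 1).re + (φ 0).im * (φ 1).im := by
        simp [Complex.mul_re]
      rw [heq] at h2
      have := neg_le_of_abs_le h2
      simpa using this
    rw [le_div_iff₀ h1s]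
    nlinarith [sq_nonneg (‖φ 0‖ - ‖φ 1‖), mul_nonneg hca hcb,
      mul_nonneg hs0 (mul_nonneg hca hcb)]
  · simp only [dotProduct, mulVec, Fin.sum_univ_two, Pi.star_apply]
    simp [hstar, star_mul', Complex.star_def]
    linear_combination hval
  · simp only []
    norm_num
    rw [show ‖c‖ = 1 / Real.sqrt (2 * (1 - s)) from by
      exact hnorm]
    rw [inv_eq_one_div]
    field_simp
    nlinarith [Real.sq_sqrt h1s.le, Real.sq_sqrt (show (0:ℝ) ≤ 2 by norm_num),
      Real.sqrt_nonneg (1 - s), Real.sqrt_nonneg 2]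
end

section
/- Let s ∈ [0, 1/2) and let G be the 3×3 Hermitian matrix with unit diagonal and off-diagonal entries G_{12} = s, G_{13} = i s, G_{23} = −i s (and G_{21} = s, G_{31} = −i s, G_{32} = i s). Then the vector ψ = (1/√(3(1 − 2s))) (−i, i, 1)^⊤ satisfies: (i) G ψ = (1 − 2s) ψ; (ii) 1 − 2s is the minimum eigenvalue of G (the other eigenvalue being 1 + s with multiplicity two); (iii) ψ† G ψ = 1; and (iv) ψ̃_i := ψ_i^* (Gψ)_i = 1/3 for i = 1, 2, 3. -/
open Matrix BigOperators Polynomial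

lemma eval_charpoly' {n : Type*} [Fintype n] [DecidableEq n] (M : Matrix n n ℂ) (t : ℂ) :
    M.charpoly.eval t = Matrix.det (t • (1 : Matrix n n ℂ) - M) := by
  rw [Matrix.charpoly, ← Polynomial.coe_evalRingHom, RingHom.map_det]
  congr 1
  ext i j
  rcases eq_or_ne i j with h | h
  · subst h
    simp [Matrix.charmatrix_apply_eq, Matrix.one_apply]
  · simp [Matrix.charmatrix_apply_ne _ _ _ h, Matrix.one_apply_ne h]

/-- For `s ∈ [0, 1/2)` and the 3×3 Hermitian Gram matrix with
`⟨c₁|c₂⟩ = s`, `⟨c₁|c₃⟩ = is`, `⟨c₂|c₃⟩ = −is`, the state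
`ψ = (−i, i, 1)ᵀ/√(3(1−2s))` is an eigenvector for `1 − 2s`, which is the minimum
eigenvalue (the other eigenvalue being `1 + s` with multiplicity two); moreover
`ψ† G ψ = 1` and `ψ̃ᵢ = ψᵢ*(Gψ)ᵢ = 1/3` for all `i`. -/
theorem qutrit_maximal_state_complex (s : ℝ) (hs : s ∈ Set.Ico (0 : ℝ) (1/2))
    (G : Matrix (Fin 3) (Fin 3) ℂ)
    (hGdef : G = !![1, (s : ℂ), Complex.I * s;
                    (s : ℂ), 1, -Complex.I * s;
                    -Complex.I * s, Complex.I * s, 1])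
    (hH : G.IsHermitian)
    (ψ : Fin 3 → ℂ)
    (hψdef : ψ = fun i => ((1 / Real.sqrt (3 * (1 - 2 * s)) : ℝ) : ℂ) *
      ![-Complex.I, Complex.I, 1] i) :
    G.charpoly = (X - C ((1 + s : ℝ) : ℂ)) ^ 2 * (X - C ((1 - 2 * s : ℝ) : ℂ)) ∧
    G *ᵥ ψ = ((1 - 2 * s : ℝ) : ℂ) • ψ ∧
    ((∃ i, hH.eigenvalues i = 1 - 2 * s) ∧ ∀ i, 1 - 2 * s ≤ hH.eigenvalues i) ∧
    star ψ ⬝ᵥ (G *ᵥ ψ) = 1 ∧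
    ∀ i, star (ψ i) * (G *ᵥ ψ) i = 1 / 3 := by
  obtain ⟨hs0, hs2⟩ := hs
  have hpos : 0 < 1 - 2 * s := by linarith
  -- charpoly
  have hcp : G.charpoly = (X - C ((1 + s : ℝ) : ℂ)) ^ 2 * (X - C ((1 - 2 * s : ℝ) : ℂ)) := by
    apply Polynomial.funext
    intro t
    rw [eval_charpoly', hGdef, Matrix.one_fin_three]
    simp [Matrix.det_fin_three, Matrix.sub_apply, Matrix.smul_apply, smul_eq_mul]
    push_cast
    linear_combination (2*(s:ℂ)^2*(t-1) - 2*(s:ℂ)^3) * Complex.I_mul_I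
  -- eigenvector equation
  have hev : G *ᵥ ψ = ((1 - 2 * s : ℝ) : ℂ) • ψ := by
    rw [hGdef, hψdef]
    set c : ℂ := ((1 / Real.sqrt (3 * (1 - 2 * s)) : ℝ) : ℂ) with hc
    funext i
    fin_cases i
    · simp [Matrix.mulVec, dotProduct, Fin.sum_univ_three]
      push_cast
      ring
    · simp [Matrix.mulVec, dotProduct, Fin.sum_univ_three]
      push_cast
      ring
    · simp [Matrix.mulVec, dotProduct, Fin.sum_univ_three]
      push_cast
      linear_combination (2*(s:ℂ)*c) * Complex.I_mul_I
  -- each eigenvalue is 1+s or 1-2s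
  have key : ∀ i, hH.eigenvalues i = 1 + s ∨ hH.eigenvalues i = 1 - 2 * s := by
    intro i
    have hv := hH.mulVec_eigenvectorBasis i
    have hvne : (⇑(hH.eigenvectorBasis i) : Fin 3 → ℂ) ≠ 0 := by
      intro h
      have h1 : hH.eigenvectorBasis i = 0 := by
        ext j
        exact congrFun h j
      exact (hH.eigenvectorBasis).toBasis.ne_zero i (by simpa using h1)
    have hdet : Matrix.det (((hH.eigenvalues i : ℝ) : ℂ) • 1 - G) = 0 := by
      rw [← Matrix.exists_mulVec_eq_zero_iff]
      refine ⟨_, hvne, ?_⟩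
      rw [Matrix.sub_mulVec, Matrix.smul_mulVec, Matrix.one_mulVec, hv]
      rw [RCLike.real_smul_eq_coe_smul (K := ℂ)]
      simp
    have heval := eval_charpoly' G ((hH.eigenvalues i : ℝ) : ℂ)
    rw [hcp, hdet] at heval
    simp only [eval_mul, eval_pow, eval_sub, eval_X, eval_C] at heval
    rcases mul_eq_zero.mp heval with h | h
    · left
      have h2 := pow_eq_zero_iff (n := 2) (by norm_num) |>.mp h
      have h3 := sub_eq_zero.mp h2
      exact_mod_cast h3
    · right
      have h3 := sub_eq_zero.mp h
      exact_mod_cast h3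
  refine ⟨hcp, hev, ⟨?_, ?_⟩, ?_⟩
  · -- existence
    by_cases h0 : ∃ i, hH.eigenvalues i = 1 - 2 * s
    · exact h0
    · push_neg at h0
      have hall : ∀ i, hH.eigenvalues i = 1 + s := fun i => (key i).resolve_right (h0 i)
      exfalso
      have hdet1 : G.det = ∏ i, (hH.eigenvalues i : ℂ) := hH.det_eq_prod_eigenvalues
      have hdet2 : G.det = ((1 + s : ℝ) : ℂ) ^ 2 * ((1 - 2 * s : ℝ) : ℂ) := by
        have h4 := eval_charpoly' G 0
        rw [hcp] at h4
        simp only [eval_mul, eval_pow, eval_sub, eval_X, eval_C, zero_sub, zero_smul,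
          zero_sub, Matrix.det_neg, Fintype.card_fin] at h4
        linear_combination h4
      rw [hdet1, Fin.prod_univ_three, hall 0, hall 1, hall 2] at hdet2
      have hreal : (1 + s) * (1 + s) * (1 + s) = (1 + s) ^ 2 * (1 - 2 * s) := by
        exact_mod_cast hdet2
      have hs0' : s = 0 := by
        by_contra hne
        have h' : 0 < s := lt_of_le_of_ne hs0 (Ne.symm hne)
        have h'' : 0 < s * ((1 + s) * (1 + s)) :=
          mul_pos h' (mul_pos (by linarith) (by linarith))
        nlinarith [hreal, h'']
      exact h0 0 (by rw [hall 0, hs0']; ring)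
  · -- minimality
    intro i
    rcases key i with h | h <;> rw [h] <;> linarith
  -- normalisation parts
  have hsqR : (1 / Real.sqrt (3 * (1 - 2 * s))) * (1 / Real.sqrt (3 * (1 - 2 * s))) *
      (1 - 2 * s) = 1 / 3 := by
    rw [div_mul_div_comm, one_mul, Real.mul_self_sqrt (by nlinarith)]
    field_simp
  have hsq : ((1 / Real.sqrt (3 * (1 - 2 * s)) : ℝ) : ℂ) *
      ((1 / Real.sqrt (3 * (1 - 2 * s)) : ℝ) : ℂ) * ((1 - 2 * s : ℝ) : ℂ) = 1 / 3 := by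
    rw [← Complex.ofReal_mul, ← Complex.ofReal_mul, hsqR]
    norm_num
  have hcomp : ∀ i, star (ψ i) * (G *ᵥ ψ) i = 1 / 3 := by
    intro i
    rw [hev]
    simp only [Pi.smul_apply, smul_eq_mul, hψdef]
    set c : ℂ := ((1 / Real.sqrt (3 * (1 - 2 * s)) : ℝ) : ℂ) with hc
    have hcstar : star c = c := by rw [hc, Complex.star_def, Complex.conj_ofReal]
    fin_cases i <;>
      simp [star_mul', hcstar, Complex.star_def, Complex.conj_I]
    · linear_combination (norm := (push_cast; ring1)) hsq - (c * c * ((1 - 2 * s : ℝ) : ℂ)) * Complex.I_mul_I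
    · linear_combination (norm := (push_cast; ring1)) hsq - (c * c * ((1 - 2 * s : ℝ) : ℂ)) * Complex.I_mul_I
    · linear_combination (norm := (push_cast; ring1)) hsq
  refine ⟨?_, hcomp⟩
  rw [dotProduct, Fin.sum_univ_three]
  have h0 := hcomp 0
  have h1 := hcomp 1
  have h2 := hcomp 2
  simp only [Pi.star_apply]
  rw [h0, h1, h2]
  norm_num
end

section
/- Let G be a d×d Hermitian positive-definite complex matrix with minimum eigenvalue λ_min. Then for every vector ψ ∈ ℂ^d with ψ† G ψ = 1, the l₁-norm of superposition satisfies Σ_{i≠j} |ψ_i||ψ_j| ≤ (d − 1)/λ_min. -/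
open Matrix BigOperators
open scoped ComplexOrder

lemma star_dotProduct_self_eq {d : ℕ} (v : Fin d → ℂ) :
    star v ⬝ᵥ v = ((∑ i, ‖v i‖ ^ 2 : ℝ) : ℂ) := by
  simp only [dotProduct, Pi.star_apply, Complex.ofReal_sum]
  refine Finset.sum_congr rfl fun i _ => ?_
  rw [Complex.star_def, ← Complex.normSq_eq_conj_mul_self]
  push_cast [Complex.normSq_eq_norm_sq]
  rfl

/-- For a Hermitian positive-definite Gram matrix `G` with minimum eigenvalue
`lmin`, every normalized state `ψ` (i.e. `ψ† G ψ = 1`) has `l₁`-norm of superposition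
`∑_{i≠j} |ψᵢ||ψⱼ| ≤ (d − 1)/lmin`. -/
theorem l1_norm_superposition_bound {d : ℕ} (G : Matrix (Fin d) (Fin d) ℂ)
    (hH : G.IsHermitian) (hpd : G.PosDef)
    (lmin : ℝ)
    (hmin₁ : ∃ i, hH.eigenvalues i = lmin)
    (hmin₂ : ∀ i, lmin ≤ hH.eigenvalues i)
    (ψ : Fin d → ℂ)
    (hψ : star ψ ⬝ᵥ (G *ᵥ ψ) = 1) :
    ∑ i, ∑ j, (if i ≠ j then ‖ψ i‖ * ‖ψ j‖ else 0) ≤ ((d : ℝ) - 1) / lmin := by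
  rcases Nat.eq_zero_or_pos d with hd | hd
  · subst hd; simp [dotProduct] at hψ
  obtain ⟨i₀, hi₀⟩ := hmin₁
  have hlpos : 0 < lmin := hi₀ ▸ hpd.eigenvalues_pos i₀
  set V : Matrix (Fin d) (Fin d) ℂ := (hH.eigenvectorUnitary : Matrix (Fin d) (Fin d) ℂ) with hV
  set φ : Fin d → ℂ := star V *ᵥ ψ with hφ
  have hVu : V ∈ Matrix.unitaryGroup (Fin d) ℂ := hH.eigenvectorUnitary.2
  have hstarφ : star φ = star ψ ᵥ* V := by
    rw [hφ, star_mulVec, star_eq_conjTranspose, conjTranspose_conjTranspose]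
  have key : star ψ ⬝ᵥ (G *ᵥ ψ) =
      ∑ i, (hH.eigenvalues i : ℂ) * ((‖φ i‖ ^ 2 : ℝ) : ℂ) := by
    conv_lhs => rw [hH.spectral_theorem, Unitary.conjStarAlgAut_apply]
    rw [← hV, ← mulVec_mulVec, ← mulVec_mulVec, dotProduct_mulVec, ← hstarφ, ← hφ]
    simp only [dotProduct, Pi.star_apply, mulVec_diagonal, Function.comp_apply]
    refine Finset.sum_congr rfl fun i _ => ?_
    have h : (star (φ i) : ℂ) * φ i = ((‖φ i‖ ^ 2 : ℝ) : ℂ) := by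
      rw [Complex.star_def, ← Complex.normSq_eq_conj_mul_self]
      push_cast [Complex.normSq_eq_norm_sq]
      rfl
    calc star (φ i) * ((hH.eigenvalues i : ℂ) * φ i)
        = (hH.eigenvalues i : ℂ) * (star (φ i) * φ i) := by ring
      _ = _ := by rw [h]
  have hnorm : ∑ i, ‖φ i‖ ^ 2 = ∑ i, ‖ψ i‖ ^ 2 := by
    have h1 : star φ ⬝ᵥ φ = star ψ ⬝ᵥ ψ := by
      rw [hstarφ, hφ, ← dotProduct_mulVec, mulVec_mulVec,
        (Matrix.mem_unitaryGroup_iff).mp hVu, one_mulVec]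
    rw [star_dotProduct_self_eq, star_dotProduct_self_eq] at h1
    exact_mod_cast h1
  have hbound : lmin * ∑ i, ‖ψ i‖ ^ 2 ≤ 1 := by
    have h1 : ((1 : ℂ)) = ((∑ i, hH.eigenvalues i * ‖φ i‖ ^ 2 : ℝ) : ℂ) := by
      rw [← hψ, key]; push_cast; ring_nf
    have h2 : (1 : ℝ) = ∑ i, hH.eigenvalues i * ‖φ i‖ ^ 2 := by exact_mod_cast h1
    rw [h2, ← hnorm, Finset.mul_sum]
    exact Finset.sum_le_sum fun i _ =>
      mul_le_mul_of_nonneg_right (hmin₂ i) (by positivity)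
  have hsum : ∑ i, ‖ψ i‖ ^ 2 ≤ 1 / lmin := by
    rw [le_div_iff₀ hlpos]; linarith [hbound]
  have hLHS : ∑ i, ∑ j, (if i ≠ j then ‖ψ i‖ * ‖ψ j‖ else 0)
      = (∑ i, ‖ψ i‖) ^ 2 - ∑ i, ‖ψ i‖ ^ 2 := by
    have h : ∀ i : Fin d, ∑ j, (if i ≠ j then ‖ψ i‖ * ‖ψ j‖ else 0)
        = ‖ψ i‖ * ∑ j, ‖ψ j‖ - ‖ψ i‖ ^ 2 := by
      intro i
      have h2 : ∀ j : Fin d, (if i ≠ j then ‖ψ i‖ * ‖ψ j‖ else 0)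
          = ‖ψ i‖ * ‖ψ j‖ - (if i = j then ‖ψ i‖ * ‖ψ j‖ else 0) := by
        intro j; by_cases hij : i = j <;> simp [hij]
      simp_rw [h2]
      rw [Finset.sum_sub_distrib, Finset.sum_ite_eq, if_pos (Finset.mem_univ i),
        ← Finset.mul_sum, sq]
    simp_rw [h]
    rw [Finset.sum_sub_distrib, ← Finset.sum_mul, sq]
  have hCS : (∑ i, ‖ψ i‖) ^ 2 ≤ (d : ℝ) * ∑ i, ‖ψ i‖ ^ 2 := by
    have := sq_sum_le_card_mul_sum_sq (s := (Finset.univ : Finset (Fin d)))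
      (f := fun i => ‖ψ i‖)
    simpa using this
  rw [hLHS]
  have hd1 : (1 : ℝ) ≤ (d : ℝ) := by exact_mod_cast hd
  have hs0 : 0 ≤ ∑ i, ‖ψ i‖ ^ 2 := by positivity
  calc (∑ i, ‖ψ i‖) ^ 2 - ∑ i, ‖ψ i‖ ^ 2
      ≤ ((d : ℝ) - 1) * ∑ i, ‖ψ i‖ ^ 2 := by nlinarith
    _ ≤ ((d : ℝ) - 1) * (1 / lmin) := by
        exact mul_le_mul_of_nonneg_left hsum (by linarith)
    _ = ((d : ℝ) - 1) / lmin := by ring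
end
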